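/- Under the dyadic fixed-effects setup, for every α ∈ D: (i) for all i ≠ j, the partial derivative ∂r_j/∂α_i at α equals −F_{ji}(α)·f_{ij}(α)/(n−1) and satisfies −(1−c₁)(1−c₂)/(n−1) ≤ ∂r_j/∂α_i(α) ≤ −c₁c₂/(n−1); (ii) for every i, ∂r_i/∂α_i(α) = 1 − (1/(n−1))·Σ_{j≠i} f_{ij}(α)·F_{ji}(α) and c₁ + c₂ − c₁c₂ ≤ ∂r_i/∂α_i(α) ≤ 1 − c₁c₂; (iii) for every i, Σ_{j=1}^{n} |∂r_j/∂α_i(α)| = 1. -/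

import Mathlib

open Finset

/-- Formulas and bounds for the partial derivatives of the
degree-matching iteration map `r`, and the unit column absolute-sum identity. -/
theorem iteration_map_partial_derivatives
    (n K : ℕ) (hn : 2 ≤ n) (hK : 1 ≤ K)
    (c₁ c₂ : ℝ) (hc₁ : c₁ ∈ Set.Ioc (0 : ℝ) (1 / 2)) (hc₂ : c₂ ∈ Set.Ioc (0 : ℝ) (1 / 2))
    (F f : ℝ → ℝ) (hFf : ∀ t : ℝ, HasDerivAt F (f t) t)
    (β : Fin K → ℝ) (x : Fin n → Fin n → Fin K → ℝ) (d : Fin n → ℝ)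
    (D : Set (Fin n → ℝ)) (hDne : D.Nonempty) (hDconv : Convex ℝ D)
    (hFbound : ∀ α ∈ D, ∀ i j : Fin n, i ≠ j →
      F (α i + ∑ k, x i j k * β k) ∈ Set.Icc c₁ (1 - c₁))
    (hfbound : ∀ α ∈ D, ∀ i j : Fin n, i ≠ j →
      f (α i + ∑ k, x i j k * β k) ∈ Set.Icc c₂ (1 - c₂))
    (r : (Fin n → ℝ) → Fin n → ℝ)
    (hr : ∀ α : Fin n → ℝ, ∀ i : Fin n,
      r α i = α i + (1 / ((n : ℝ) - 1)) *
        (d i - ∑ j ∈ univ.erase i,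
          F (α i + ∑ k, x i j k * β k) * F (α j + ∑ k, x j i k * β k)))
    (α : Fin n → ℝ) (hα : α ∈ D) :
    -- (i) off-diagonal partial derivatives: formula and bounds
    (∀ i j : Fin n, i ≠ j →
      HasDerivAt (fun t : ℝ => r (Function.update α i t) j)
        (-(F (α j + ∑ k, x j i k * β k) * f (α i + ∑ k, x i j k * β k)) / ((n : ℝ) - 1))
        (α i) ∧
      -((1 - c₁) * (1 - c₂)) / ((n : ℝ) - 1) ≤
        -(F (α j + ∑ k, x j i k * β k) * f (α i + ∑ k, x i j k * β k)) / ((n : ℝ) - 1) ∧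
      -(F (α j + ∑ k, x j i k * β k) * f (α i + ∑ k, x i j k * β k)) / ((n : ℝ) - 1) ≤
        -(c₁ * c₂) / ((n : ℝ) - 1)) ∧
    -- (ii) diagonal partial derivatives: formula and bounds
    (∀ i : Fin n,
      HasDerivAt (fun t : ℝ => r (Function.update α i t) i)
        (1 - (1 / ((n : ℝ) - 1)) *
          ∑ j ∈ univ.erase i,
            f (α i + ∑ k, x i j k * β k) * F (α j + ∑ k, x j i k * β k))
        (α i) ∧
      c₁ + c₂ - c₁ * c₂ ≤
        1 - (1 / ((n : ℝ) - 1)) *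
          ∑ j ∈ univ.erase i,
            f (α i + ∑ k, x i j k * β k) * F (α j + ∑ k, x j i k * β k) ∧
      1 - (1 / ((n : ℝ) - 1)) *
          ∑ j ∈ univ.erase i,
            f (α i + ∑ k, x i j k * β k) * F (α j + ∑ k, x j i k * β k) ≤
        1 - c₁ * c₂) ∧
    -- (iii) the absolute values of the partial derivatives in each column sum to one
    (∀ i : Fin n,
      |1 - (1 / ((n : ℝ) - 1)) *
          ∑ j ∈ univ.erase i,
            f (α i + ∑ k, x i j k * β k) * F (α j + ∑ k, x j i k * β k)| +
        ∑ j ∈ univ.erase i,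
          |(-(F (α j + ∑ k, x j i k * β k) * f (α i + ∑ k, x i j k * β k))) / ((n : ℝ) - 1)|
      = 1) := by
  obtain ⟨hc1pos, hc1le⟩ := hc₁
  obtain ⟨hc2pos, hc2le⟩ := hc₂
  have hn2 : (2:ℝ) ≤ (n:ℝ) := by exact_mod_cast hn
  have hn1pos : (0:ℝ) < (n:ℝ) - 1 := by linarith
  set X : Fin n → Fin n → ℝ := fun i j => ∑ k, x i j k * β k with hX
  have hAB : ∀ i j : Fin n, i ≠ j →
      c₁ * c₂ ≤ F (α j + X j i) * f (α i + X i j) ∧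
      F (α j + X j i) * f (α i + X i j) ≤ (1 - c₁) * (1 - c₂) := by
    intro i j hij
    obtain ⟨hA1, hA2⟩ := hFbound α hα j i hij.symm
    obtain ⟨hB1, hB2⟩ := hfbound α hα i j hij
    constructor
    · exact mul_le_mul hA1 hB1 (le_of_lt hc2pos) (by linarith)
    · exact mul_le_mul hA2 hB2 (by linarith) (by linarith)
  have hderF : ∀ (a c : ℝ), HasDerivAt (fun t => F (t + c)) (f (a + c)) a := by
    intro a c
    have h := (hFf (a + c)).comp a ((hasDerivAt_id a).add_const c)
    exact h.congr_deriv (mul_one _)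
  -- off-diagonal derivative
  have hoff : ∀ i j : Fin n, i ≠ j →
      HasDerivAt (fun t : ℝ => r (Function.update α i t) j)
        (-(F (α j + X j i) * f (α i + X i j)) / ((n : ℝ) - 1)) (α i) := by
    intro i j hij
    have hiej : i ∈ univ.erase j := by simp [hij]
    have hfun : ∀ t : ℝ, r (Function.update α i t) j =
        α j + (1 / ((n : ℝ) - 1)) *
          (d j - (F (α j + X j i) * F (t + X i j) +
            ∑ l ∈ (univ.erase j).erase i, F (α j + X j l) * F (α l + X l j))) := by
      intro t
      rw [hr]
      rw [← Finset.add_sum_erase _ _ hiej]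
      rw [Function.update_of_ne hij.symm t α, Function.update_self i t α]
      have hs : ∑ l ∈ (univ.erase j).erase i,
            F (α j + X j l) * F (Function.update α i t l + X l j)
          = ∑ l ∈ (univ.erase j).erase i, F (α j + X j l) * F (α l + X l j) := by
        apply Finset.sum_congr rfl
        intro l hl
        rw [Function.update_of_ne (Finset.mem_erase.mp hl).1 t α]
      rw [hs]
    have heq : (fun t : ℝ => r (Function.update α i t) j) =
        (fun t : ℝ => α j + (1 / ((n : ℝ) - 1)) *
          (d j - (F (α j + X j i) * F (t + X i j) +
            ∑ l ∈ (univ.erase j).erase i, F (α j + X j l) * F (α l + X l j)))) :=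
      funext hfun
    rw [heq]
    have h1 := ((hderF (α i) (X i j)).const_mul (F (α j + X j i))).add_const
      (∑ l ∈ (univ.erase j).erase i, F (α j + X j l) * F (α l + X l j))
    have h2 := (h1.const_sub (d j)).const_mul (1 / ((n : ℝ) - 1))
    have h3 := h2.const_add (α j)
    exact h3.congr_deriv (by ring)
  -- diagonal derivative
  have hdiag : ∀ i : Fin n,
      HasDerivAt (fun t : ℝ => r (Function.update α i t) i)
        (1 - (1 / ((n : ℝ) - 1)) *
          ∑ j ∈ univ.erase i, f (α i + X i j) * F (α j + X j i)) (α i) := by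
    intro i
    have hfun : ∀ t : ℝ, r (Function.update α i t) i =
        t + (1 / ((n : ℝ) - 1)) *
          (d i - ∑ j ∈ univ.erase i, F (t + X i j) * F (α j + X j i)) := by
      intro t
      rw [hr]
      rw [Function.update_self i t α]
      have hs : ∑ l ∈ univ.erase i,
            F (t + X i l) * F (Function.update α i t l + X l i)
          = ∑ l ∈ univ.erase i, F (t + X i l) * F (α l + X l i) := by
        apply Finset.sum_congr rfl
        intro l hl
        rw [Function.update_of_ne (Finset.mem_erase.mp hl).1 t α]
      rw [hs]
    have hsum : HasDerivAt
        (fun t : ℝ => ∑ j ∈ univ.erase i, F (t + X i j) * F (α j + X j i))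
        (∑ j ∈ univ.erase i, f (α i + X i j) * F (α j + X j i)) (α i) := by
      apply HasDerivAt.fun_sum
      intro j hj
      exact (hderF (α i) (X i j)).mul_const (F (α j + X j i))
    have heq : (fun t : ℝ => r (Function.update α i t) i) =
        (fun t : ℝ => (1 / ((n : ℝ) - 1)) *
          (d i - ∑ j ∈ univ.erase i, F (t + X i j) * F (α j + X j i)) + t) := by
      funext t; rw [hfun t]; ring
    rw [heq]
    have hd := ((hsum.const_sub (d i)).const_mul (1 / ((n : ℝ) - 1))).add
      (hasDerivAt_id (α i))
    exact hd.congr_deriv (by ring)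
  -- sum bounds for the diagonal
  have hsumbd : ∀ i : Fin n,
      ((n : ℝ) - 1) * (c₁ * c₂) ≤
        (∑ j ∈ univ.erase i, f (α i + X i j) * F (α j + X j i)) ∧
      (∑ j ∈ univ.erase i, f (α i + X i j) * F (α j + X j i)) ≤
        ((n : ℝ) - 1) * ((1 - c₁) * (1 - c₂)) := by
    intro i
    have hcard : ((univ.erase i : Finset (Fin n)).card : ℝ) = (n : ℝ) - 1 := by
      rw [Finset.card_erase_of_mem (Finset.mem_univ i), Finset.card_univ, Fintype.card_fin]
      push_cast
      have : 1 ≤ n := by omega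
      rw [Nat.cast_sub this]
      simp
    constructor
    · calc ((n : ℝ) - 1) * (c₁ * c₂)
          = ∑ _j ∈ univ.erase i, c₁ * c₂ := by rw [Finset.sum_const, nsmul_eq_mul, hcard]
        _ ≤ _ := by
            apply Finset.sum_le_sum
            intro j hj
            have hij : i ≠ j := fun h => (Finset.mem_erase.mp hj).1 h.symm
            have := (hAB i j hij).1
            linarith [this, mul_comm (F (α j + X j i)) (f (α i + X i j))]
    · calc (∑ j ∈ univ.erase i, f (α i + X i j) * F (α j + X j i))
          ≤ ∑ _j ∈ univ.erase i, (1 - c₁) * (1 - c₂) := by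
            apply Finset.sum_le_sum
            intro j hj
            have hij : i ≠ j := fun h => (Finset.mem_erase.mp hj).1 h.symm
            have := (hAB i j hij).2
            rw [mul_comm]
            exact this
        _ = ((n : ℝ) - 1) * ((1 - c₁) * (1 - c₂)) := by
            rw [Finset.sum_const, nsmul_eq_mul, hcard]
  refine ⟨?_, ?_, ?_⟩
  · intro i j hij
    refine ⟨hoff i j hij, ?_, ?_⟩
    · rw [div_le_div_iff₀ hn1pos hn1pos]
      nlinarith [(hAB i j hij).2]
    · rw [div_le_div_iff₀ hn1pos hn1pos]
      nlinarith [(hAB i j hij).1]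
  · intro i
    obtain ⟨hs1, hs2⟩ := hsumbd i
    refine ⟨hdiag i, ?_, ?_⟩
    · have : (1 / ((n : ℝ) - 1)) *
          (∑ j ∈ univ.erase i, f (α i + X i j) * F (α j + X j i)) ≤ (1 - c₁) * (1 - c₂) := by
        rw [div_mul_eq_mul_div, one_mul, div_le_iff₀ hn1pos]
        linarith [hs2]
      linarith
    · have : c₁ * c₂ ≤ (1 / ((n : ℝ) - 1)) *
          (∑ j ∈ univ.erase i, f (α i + X i j) * F (α j + X j i)) := by
        rw [div_mul_eq_mul_div, one_mul, le_div_iff₀ hn1pos]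
        linarith [hs1]
      linarith
  · intro i
    obtain ⟨hs1, hs2⟩ := hsumbd i
    have hdpos : 0 ≤ 1 - (1 / ((n : ℝ) - 1)) *
        ∑ j ∈ univ.erase i, f (α i + X i j) * F (α j + X j i) := by
      have : (1 / ((n : ℝ) - 1)) *
          (∑ j ∈ univ.erase i, f (α i + X i j) * F (α j + X j i)) ≤ (1 - c₁) * (1 - c₂) := by
        rw [div_mul_eq_mul_div, one_mul, div_le_iff₀ hn1pos]
        linarith [hs2]
      nlinarith
    rw [abs_of_nonneg hdpos]
    have habs : ∑ j ∈ univ.erase i,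
        |(-(F (α j + X j i) * f (α i + X i j))) / ((n : ℝ) - 1)|
        = ∑ j ∈ univ.erase i, (f (α i + X i j) * F (α j + X j i)) / ((n : ℝ) - 1) := by
      apply Finset.sum_congr rfl
      intro j hj
      have hij : i ≠ j := fun h => (Finset.mem_erase.mp hj).1 h.symm
      have hpos : 0 < F (α j + X j i) * f (α i + X i j) :=
        lt_of_lt_of_le (by positivity) (hAB i j hij).1
      rw [abs_div, abs_neg, abs_of_pos hpos, abs_of_pos hn1pos, mul_comm]
    rw [habs, ← Finset.sum_div]
    field_simp
    ring
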